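/- arXiv:1906.04339 — 5 statements merged into one kernel-verified Lean document; each statement's English description precedes it below -/
import Mathlib

section
/- For every integer n ≥ 2, the sum over i = 1, …, n−1 of the reciprocals of the nonzero Laplacian eigenvalues of the n-cycle satisfies ∑_{i=1}^{n−1} 1/(4·sin²(iπ/n)) = (n² − 1)/12. (Equivalently, the Kirchhoff index of C_n, which equals n times this sum, is (n³ − n)/12.) -/
open Finset Complex

private lemma aux_sumId (m : ℕ) : ∑ j ∈ range m, (j:ℂ) = m*(m-1)/2 := by
  induction m with
  | zero => simp
  | succ m ih => rw [Finset.sum_range_succ, ih]; push_cast; ring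

private lemma aux_sumSq (m : ℕ) : ∑ j ∈ range m, (j:ℂ)^2 = m*(m-1)*(2*m-1)/6 := by
  induction m with
  | zero => simp
  | succ m ih => rw [Finset.sum_range_succ, ih]; push_cast; ring

private lemma aux_geomB (x : ℂ) (m : ℕ) :
    (x-1) * ∑ j ∈ range m, (j:ℂ)*x^j
      = ((m:ℂ)-1)*x^m - (∑ j ∈ range m, x^j) + 1 := by
  induction m with
  | zero => simp
  | succ m ih =>
    rw [Finset.sum_range_succ, Finset.sum_range_succ (f := fun j => x^j)]
    push_cast
    linear_combination ih

private lemma aux_geomC (x : ℂ) (m : ℕ) :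
    (x-1) * ∑ j ∈ range m, (j:ℂ)^2*x^j
      = ((m:ℂ)-1)^2*x^m - 2*(∑ j ∈ range m, (j:ℂ)*x^j)
        + (∑ j ∈ range m, x^j) - 1 := by
  induction m with
  | zero => simp
  | succ m ih =>
    rw [Finset.sum_range_succ, Finset.sum_range_succ (f := fun j => x^j),
      Finset.sum_range_succ (f := fun j => (j:ℂ)*x^j)]
    push_cast
    linear_combination ih

private lemma aux_omega_sub_one_sq (θ : ℝ) :
    (Complex.exp (2*(θ:ℂ)*Complex.I) - 1)^2
      = -4 * Complex.exp (2*(θ:ℂ)*Complex.I) * ((Real.sin θ : ℂ))^2 := by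
  rw [Complex.ofReal_sin, Complex.sin]
  set e := Complex.exp ((θ:ℂ)*Complex.I) with he
  set f := Complex.exp (-(θ:ℂ)*Complex.I) with hf
  have hef : e * f = 1 := by
    rw [he, hf, ← Complex.exp_add]; ring_nf; exact Complex.exp_zero
  have h2 : Complex.exp (2*(θ:ℂ)*Complex.I) = e^2 := by
    rw [he, ← Complex.exp_nat_mul]; ring_nf
  rw [h2]
  have hI : Complex.I^2 = -1 := Complex.I_sq
  linear_combination (e^2*(f-e)^2) * hI + (2*e^2 - 1 - e*f) * hef

private lemma aux_sin_ne (n k : ℕ) (hk1 : 1 ≤ k) (hkn : k < n) :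
    Real.sin (k*Real.pi/n) ≠ 0 := by
  have hn0 : (0:ℝ) < n := by exact_mod_cast (by omega : 0 < n)
  have hk0 : (0:ℝ) < k := by exact_mod_cast hk1
  apply ne_of_gt
  apply Real.sin_pos_of_pos_of_lt_pi
  · positivity
  · rw [div_lt_iff₀ (by positivity)]
    have : (k:ℝ) < n := by exact_mod_cast hkn
    nlinarith [Real.pi_pos]

private lemma aux_key (n k : ℕ) (hn : 2 ≤ n) (hk1 : 1 ≤ k) (hkn : k < n) :
    ∑ j ∈ range n, (j:ℂ)*((n:ℂ)-(j:ℂ)) * ((Complex.exp (2*(Real.pi:ℂ)*Complex.I/n))^k)^j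
      = -(n:ℂ) / (2 * ((Real.sin (k*Real.pi/n) : ℝ) : ℂ)^2) := by
  have hn0 : (n:ℂ) ≠ 0 := by exact_mod_cast (by omega : n ≠ 0)
  have hnR : (n:ℝ) ≠ 0 := by exact_mod_cast (by omega : n ≠ 0)
  have hprim : IsPrimitiveRoot (Complex.exp (2*(Real.pi:ℂ)*Complex.I/n)) n :=
    Complex.isPrimitiveRoot_exp n (by omega)
  set ζ := Complex.exp (2*(Real.pi:ℂ)*Complex.I/n) with hζ
  set ω := ζ^k with hω
  set θ : ℝ := k*Real.pi/n with hθ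
  have hωexp : ω = Complex.exp (2*(θ:ℂ)*Complex.I) := by
    rw [hω, hζ, ← Complex.exp_nat_mul]
    congr 1
    push_cast [hθ]
    field_simp
  have hsθ : Real.sin θ ≠ 0 := aux_sin_ne n k hk1 hkn
  set s : ℂ := ((Real.sin θ : ℝ) : ℂ) with hs
  have hs0 : s ≠ 0 := Complex.ofReal_ne_zero.mpr hsθ
  have h1 : (ω - 1)^2 = -4*ω*s^2 := by rw [hωexp]; exact aux_omega_sub_one_sq θ
  have hω1 : ω ≠ 1 := hprim.pow_ne_one_of_pos_of_lt (by omega) hkn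
  have hωn : ω^n = 1 := by rw [hω, ← pow_mul, mul_comm, pow_mul, hprim.pow_eq_one, one_pow]
  have hω0 : ω ≠ 0 := by rw [hω, hζ]; exact pow_ne_zero _ (Complex.exp_ne_zero _)
  have hA : ∑ j ∈ range n, ω^j = 0 := by
    rw [geom_sum_eq hω1, hωn, sub_self, zero_div]
  have hBv := aux_geomB ω n
  rw [hωn, hA] at hBv
  have hCv := aux_geomC ω n
  rw [hωn, hA] at hCv
  have hS0 : ∑ j ∈ range n, (j:ℂ)*((n:ℂ)-(j:ℂ)) * ω^j
      = (n:ℂ) * (∑ j ∈ range n, (j:ℂ)*ω^j) - ∑ j ∈ range n, (j:ℂ)^2*ω^j := by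
    rw [Finset.mul_sum, ← Finset.sum_sub_distrib]
    exact Finset.sum_congr rfl (fun j _ => by ring)
  set S := ∑ j ∈ range n, (j:ℂ)*((n:ℂ)-(j:ℂ)) * ω^j with hSdef
  have hSv : (ω-1)^2 * S = 2*(n:ℂ)*ω := by
    linear_combination (ω-1)^2 * hS0 + ((n:ℂ)*(ω-1) + 2) * hBv - (ω-1) * hCv
  rw [h1] at hSv
  rw [eq_div_iff (by simp [hs0])]
  apply mul_left_cancel₀ (show (-2:ℂ)*ω ≠ 0 by simp [hω0])
  linear_combination hSv

/-- For every integer `n ≥ 2`, the sum of the reciprocals of the nonzero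
Laplacian eigenvalues `4·sin²(iπ/n)`, `i = 1, …, n−1`, of the cycle `C_n` equals
`(n² − 1)/12`. -/
theorem sum_reciprocal_lap_eigenvalues_cycle (n : ℕ) (hn : 2 ≤ n) :
    ∑ i ∈ Finset.Ico 1 n, 1 / (4 * Real.sin (i * Real.pi / n) ^ 2) =
      ((n : ℝ) ^ 2 - 1) / 12 := by
  have hn0 : (n:ℂ) ≠ 0 := by exact_mod_cast (by omega : n ≠ 0)
  have hprim : IsPrimitiveRoot (Complex.exp (2*(Real.pi:ℂ)*Complex.I/n)) n :=
    Complex.isPrimitiveRoot_exp n (by omega)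
  set ζ := Complex.exp (2*(Real.pi:ℂ)*Complex.I/n) with hζ
  have hC : ∑ k ∈ Finset.Ico 1 n, (1:ℂ) / (4 * ((Real.sin (k * Real.pi / n) : ℝ):ℂ) ^ 2)
      = ((n:ℂ)^2 - 1)/12 := by
    have hterm : ∀ k ∈ Finset.Ico 1 n,
        (1:ℂ) / (4 * ((Real.sin (k * Real.pi / n) : ℝ):ℂ) ^ 2)
          = (-1/(2*(n:ℂ))) * ∑ j ∈ range n, (j:ℂ)*((n:ℂ)-(j:ℂ)) * (ζ^k)^j := by
      intro k hk
      obtain ⟨hk1, hkn⟩ := Finset.mem_Ico.mp hk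
      rw [aux_key n k hn hk1 hkn]
      have hs0 : ((Real.sin (k*Real.pi/n) : ℝ):ℂ) ≠ 0 :=
        Complex.ofReal_ne_zero.mpr (aux_sin_ne n k hk1 hkn)
      have hA : (4:ℂ) * ((Real.sin (k*Real.pi/n) : ℝ):ℂ)^2 ≠ 0 :=
        mul_ne_zero (by norm_num : (4:ℂ) ≠ 0) (pow_ne_zero 2 hs0)
      have hB : (2*(n:ℂ)) * (2 * ((Real.sin (k*Real.pi/n) : ℝ):ℂ)^2) ≠ 0 :=
        mul_ne_zero (mul_ne_zero two_ne_zero hn0)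
          (mul_ne_zero two_ne_zero (pow_ne_zero 2 hs0))
      rw [div_mul_div_comm, div_eq_div_iff hA hB]
      ring
    rw [Finset.sum_congr rfl hterm, ← Finset.mul_sum, Finset.sum_comm]
    have hswap : ∀ j ∈ range n,
        ∑ k ∈ Finset.Ico 1 n, (j:ℂ)*((n:ℂ)-(j:ℂ)) * (ζ^k)^j
          = (j:ℂ)*((n:ℂ)-(j:ℂ)) * (-1) := by
      intro j hj
      have hps : ∀ k ∈ Finset.Ico 1 n, (j:ℂ)*((n:ℂ)-(j:ℂ)) * (ζ^k)^j
          = (j:ℂ)*((n:ℂ)-(j:ℂ)) * (ζ^j)^k := by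
        intro k _
        rw [← pow_mul, mul_comm k j, pow_mul]
      rw [Finset.sum_congr rfl hps, ← Finset.mul_sum]
      rcases Nat.eq_zero_or_pos j with h0 | hj1
      · simp [h0]
      · congr 1
        have hj2 := Finset.mem_range.mp hj
        have hx1 : ζ^j ≠ 1 := hprim.pow_ne_one_of_pos_of_lt hj1.ne' hj2
        have hxn : (ζ^j)^n = 1 := by
          rw [← pow_mul, mul_comm, pow_mul, hprim.pow_eq_one, one_pow]
        have hgeo : ∑ k ∈ range n, (ζ^j)^k = 0 := by
          rw [geom_sum_eq hx1, hxn, sub_self, zero_div]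
        rw [Finset.sum_Ico_eq_sub _ (by omega : 1 ≤ n), hgeo]
        simp
    rw [Finset.sum_congr rfl hswap]
    have hsplit : ∑ j ∈ range n, (j:ℂ)*((n:ℂ)-(j:ℂ)) * (-1)
        = -((n:ℂ) * (∑ j ∈ range n, (j:ℂ)) - ∑ j ∈ range n, (j:ℂ)^2) := by
      rw [Finset.mul_sum, ← Finset.sum_sub_distrib, ← Finset.sum_neg_distrib]
      exact Finset.sum_congr rfl (fun j _ => by ring)
    rw [hsplit, aux_sumId, aux_sumSq]
    field_simp
    ring
  have hcast : ((∑ i ∈ Finset.Ico 1 n, 1 / (4 * Real.sin (i * Real.pi / n) ^ 2) : ℝ) : ℂ)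
      = (((((n:ℝ)^2 - 1)/12 : ℝ)) : ℂ) := by
    push_cast at hC ⊢
    rw [hC]
  exact_mod_cast hcast
end

section
/- For every integer n ≥ 3, the characteristic polynomial of the Laplacian matrix of G_n factors as char(L(G_n)) = char(2·L(C_n)) · (X − 6)^n in ℝ[X]; that is, the Laplacian spectrum of G_n consists of twice each Laplacian eigenvalue of C_n together with the eigenvalue 6 with multiplicity n. -/
open Polynomial

/-- The graph `G_n = P₂ ⊠ C_n`: vertex set `(ZMod n) × Fin 2`, where two distinct vertices
`(i,a)` and `(j,b)` are adjacent iff `i = j` or `i = j + 1` or `j = i + 1` in `ZMod n`. -/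
def Gn (n : ℕ) : SimpleGraph (ZMod n × Fin 2) where
  Adj x y := x ≠ y ∧ (x.1 = y.1 ∨ x.1 = y.1 + 1 ∨ y.1 = x.1 + 1)
  symm := by
    refine ⟨?_⟩
    rintro x y ⟨hne, h | h | h⟩
    · exact ⟨hne.symm, Or.inl h.symm⟩
    · exact ⟨hne.symm, Or.inr (Or.inr h)⟩
    · exact ⟨hne.symm, Or.inr (Or.inl h)⟩
  loopless := by refine ⟨?_⟩; rintro x ⟨hne, -⟩; exact hne rfl

instance (n : ℕ) : DecidableRel (Gn n).Adj :=
  fun _ _ => inferInstanceAs (Decidable (_ ∧ _))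

section Aux
open Matrix Finset

lemma my_charpoly_conj {n : Type*} [DecidableEq n] [Fintype n] {R : Type*} [CommRing R]
    (S T M : Matrix n n R) (hST : S * T = 1) :
    (S * M * T).charpoly = M.charpoly := by
  have hmap1 : (1 : Matrix n n R).map (C : R → R[X]) = 1 :=
    Matrix.map_one _ (map_zero C) (map_one C)
  have key : charmatrix (S * M * T) =
      S.map (C : R →+* R[X]) * charmatrix M * T.map C := by
    rw [charmatrix, charmatrix]
    rw [mul_sub, sub_mul]
    congr 1
    · have h1 : (Matrix.scalar n (X : R[X])) * T.map C = T.map C * Matrix.scalar n X :=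
        (Matrix.scalar_commute (X : R[X]) (fun r => Commute.all X r) _)
      symm
      calc S.map (C : R →+* R[X]) * Matrix.scalar n X * T.map C
          = S.map C * (Matrix.scalar n X * T.map C) := by rw [mul_assoc]
        _ = S.map C * (T.map C * Matrix.scalar n X) := by rw [h1]
        _ = (S * T).map C * Matrix.scalar n X := by
            rw [← mul_assoc, ← Matrix.map_mul]
        _ = Matrix.scalar n X := by rw [hST, hmap1, one_mul]
    · show (S * M * T).map (C : R →+* R[X]) = _
      rw [Matrix.map_mul, Matrix.map_mul]; rfl
  rw [Matrix.charpoly, Matrix.charpoly, key, det_mul, det_mul]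
  have h2 : S.map (C : R →+* R[X]) * T.map C = 1 := by
    rw [← Matrix.map_mul, hST]; exact hmap1
  calc (S.map (C : R →+* R[X])).det * (charmatrix M).det * (T.map C).det
      = (charmatrix M).det * ((S.map (C : R →+* R[X])).det * (T.map C).det) := by ring
    _ = (charmatrix M).det * (S.map (C : R →+* R[X]) * T.map C).det := by rw [det_mul]
    _ = (charmatrix M).det := by rw [h2, det_one, mul_one]

/-- The equivalence `α × Fin 2 ≃ α ⊕ α`. -/
def pf2Equiv (α : Type*) : α × Fin 2 ≃ α ⊕ α where
  toFun x := if x.2 = 0 then Sum.inl x.1 else Sum.inr x.1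
  invFun y := Sum.elim (fun a => (a, 0)) (fun a => (a, 1)) y
  left_inv := by rintro ⟨a, b⟩; fin_cases b <;> simp
  right_inv := by rintro (a | a) <;> simp [Fin.ext_iff]

abbrev zmodFinEquiv (m : ℕ) : Fin (m + 3) ≃ ZMod (m + 3) := Equiv.refl (Fin (m + 3))

end Aux

open Matrix Finset in
/-- For every integer `n ≥ 3`, the characteristic polynomial of the Laplacian
matrix of `G_n` factors as `char(L(G_n)) = char(2·L(C_n)) · (X − 6)^n` over `ℝ`. -/
theorem charpoly_lapMatrix_Gn_factorization (n : ℕ) [NeZero n] (hn : 3 ≤ n) :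
    ((Gn n).lapMatrix ℝ).charpoly =
      ((2 : ℝ) • (SimpleGraph.cycleGraph n).lapMatrix ℝ).charpoly *
        (X - C (6 : ℝ)) ^ n := by
  obtain ⟨m, rfl⟩ : ∃ m, n = m + 3 := ⟨n - 3, by omega⟩
  set V := ZMod (m + 3) with hV
  -- basic arithmetic facts in `ZMod (m+3)`
  haveI : Fact (1 < m + 3) := ⟨by omega⟩
  have h1 : (1 : V) ≠ 0 := one_ne_zero
  have h2 : (2 : V) ≠ 0 := by
    intro h
    have : ((2 : ℕ) : V) = 0 := by exact_mod_cast h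
    have hdvd := (ZMod.natCast_eq_zero_iff 2 (m + 3)).mp this
    have := Nat.le_of_dvd (by norm_num) hdvd
    omega
  have d1 : ∀ i : V, i - 1 ≠ i := fun i h => h1 (sub_eq_self.mp h)
  have d3 : ∀ i : V, i ≠ i + 1 := fun i h => h1 (left_eq_add.mp h)
  have d2 : ∀ i : V, i - 1 ≠ i + 1 := by
    intro i h
    have h' : i = i + 1 + 1 := sub_eq_iff_eq_add.mp h
    rw [add_assoc] at h'
    have := left_eq_add.mp h'
    exact h2 (by rwa [one_add_one_eq_two] at this)
  -- adjacency characterizations in `Gn`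
  have hAdjS : ∀ (a : Fin 2) (i j : V),
      (Gn (m + 3)).Adj (i, a) (j, a) ↔ (i = j + 1 ∨ j = i + 1) := by
    intro a i j
    constructor
    · rintro ⟨hne, h | h | h⟩
      · exact absurd (Prod.ext h rfl) hne
      · exact Or.inl h
      · exact Or.inr h
    · rintro (h | h)
      · refine ⟨fun hp => ?_, Or.inr (Or.inl h)⟩
        have hij : i = j := congrArg Prod.fst hp
        subst hij
        exact d3 i h
      · refine ⟨fun hp => ?_, Or.inr (Or.inr h)⟩
        have hij : i = j := congrArg Prod.fst hp
        subst hij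
        exact d3 i h
  have hAdjD : ∀ (a b : Fin 2), a ≠ b → ∀ i j : V,
      (Gn (m + 3)).Adj (i, a) (j, b) ↔ (i = j ∨ i = j + 1 ∨ j = i + 1) := by
    intro a b hab i j
    constructor
    · rintro ⟨-, h⟩; exact h
    · intro h; exact ⟨fun hp => hab (Prod.ext_iff.mp hp).2, h⟩
  -- the neighbor finset and degree of `Gn`
  have hNF : ∀ x : V × Fin 2, (Gn (m + 3)).neighborFinset x
      = ((({x.1 - 1, x.1, x.1 + 1} : Finset V) ×ˢ (Finset.univ : Finset (Fin 2))).erase x) := by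
    rintro ⟨i, a⟩
    ext ⟨j, b⟩
    simp only [SimpleGraph.mem_neighborFinset, Finset.mem_erase, Finset.mem_product,
      Finset.mem_insert, Finset.mem_singleton, Finset.mem_univ, and_true]
    show ((i, a) ≠ (j, b) ∧ (i = j ∨ i = j + 1 ∨ j = i + 1)) ↔
      ((j, b) ≠ (i, a) ∧ (j = i - 1 ∨ j = i ∨ j = i + 1))
    constructor
    · rintro ⟨hne, h⟩
      refine ⟨hne.symm, ?_⟩
      rcases h with h | h | h
      · exact Or.inr (Or.inl h.symm)
      · exact Or.inl (by rw [h]; ring)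
      · exact Or.inr (Or.inr h)
    · rintro ⟨hne, h⟩
      refine ⟨hne.symm, ?_⟩
      rcases h with h | h | h
      · exact Or.inr (Or.inl (by rw [h]; ring))
      · exact Or.inl h.symm
      · exact Or.inr (Or.inr h)
  have hdeg : ∀ x : V × Fin 2, (Gn (m + 3)).degree x = 5 := by
    intro x
    rw [← SimpleGraph.card_neighborFinset_eq_degree, hNF,
      Finset.card_erase_of_mem, Finset.card_product]
    · rw [Finset.card_insert_of_notMem, Finset.card_insert_of_notMem,
        Finset.card_singleton]
      · simp
      · simpa using d3 x.1
      · simp only [Finset.mem_insert, Finset.mem_singleton]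
        push_neg
        exact ⟨d1 x.1, d2 x.1⟩
    · simp [Finset.mem_product]
  -- entrywise description of the Laplacian of `Gn`
  have hlap : ∀ x y : V × Fin 2, (Gn (m + 3)).lapMatrix ℝ x y =
      (if x = y then (5 : ℝ) else 0) - (if (Gn (m + 3)).Adj x y then 1 else 0) := by
    intro x y
    by_cases h : x = y <;>
      simp [SimpleGraph.lapMatrix, SimpleGraph.degMatrix, Matrix.diagonal_apply, h, hdeg]
  -- block matrices
  set A : Matrix V V ℝ :=
    Matrix.of (fun i j => if i = j + 1 ∨ j = i + 1 then (1 : ℝ) else 0) with hA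
  set Mm : Matrix V V ℝ := (5 : ℝ) • 1 - A with hMm
  set Nb : Matrix V V ℝ := -(A + 1) with hNb
  set e : (V × Fin 2) ≃ (V ⊕ V) := pf2Equiv V with he
  -- Step 2: the reindexed Laplacian of `Gn` is a 2x2 block matrix
  have hre : (Matrix.reindex e e ((Gn (m + 3)).lapMatrix ℝ)) = fromBlocks Mm Nb Nb Mm := by
    ext x y
    have hsymm0 : e.symm ∘ Sum.inl = fun i => ((i : V), (0 : Fin 2)) := rfl
    rcases x with i | i <;> rcases y with j | j
    · show (Gn (m + 3)).lapMatrix ℝ (i, 0) (j, 0) = Mm i j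
      rw [hlap]; simp only [hAdjS]
      by_cases hij : i = j
      · subst hij
        simp [hMm, hA, (d3 i).symm, Matrix.one_apply]
      · simp [hMm, hA, hij, Prod.ext_iff, Matrix.one_apply]
    · show (Gn (m + 3)).lapMatrix ℝ (i, 0) (j, 1) = Nb i j
      rw [hlap]; simp only [hAdjD 0 1 (by decide)]
      by_cases hij : i = j
      · subst hij
        simp [hNb, hA, (d3 i).symm, Matrix.one_apply, Prod.ext_iff]
      · simp [hNb, hA, hij, Prod.ext_iff, Matrix.one_apply]
    · show (Gn (m + 3)).lapMatrix ℝ (i, 1) (j, 0) = Nb i j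
      rw [hlap]; simp only [hAdjD 1 0 (by decide)]
      by_cases hij : i = j
      · subst hij
        simp [hNb, hA, (d3 i).symm, Matrix.one_apply, Prod.ext_iff]
      · simp [hNb, hA, hij, Prod.ext_iff, Matrix.one_apply]
    · show (Gn (m + 3)).lapMatrix ℝ (i, 1) (j, 1) = Mm i j
      rw [hlap]; simp only [hAdjS]
      by_cases hij : i = j
      · subst hij
        simp [hMm, hA, (d3 i).symm, Matrix.one_apply]
      · simp [hMm, hA, hij, Prod.ext_iff, Matrix.one_apply]
  -- Step 3: conjugation to block-diagonal form
  set S : Matrix (V ⊕ V) (V ⊕ V) ℝ := fromBlocks 1 1 1 (-1) with hS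
  set T : Matrix (V ⊕ V) (V ⊕ V) ℝ := (2⁻¹ : ℝ) • S with hT
  set D : Matrix (V ⊕ V) (V ⊕ V) ℝ := fromBlocks (Mm + Nb) 0 0 (Mm - Nb) with hD
  have hSS : S * S = (2 : ℝ) • (1 : Matrix (V ⊕ V) (V ⊕ V) ℝ) := by
    rw [hS, ← fromBlocks_one, fromBlocks_multiply, fromBlocks_smul, Matrix.fromBlocks_inj]
    refine ⟨?_, ?_, ?_, ?_⟩ <;>
      simp only [Matrix.one_mul, Matrix.mul_one, Matrix.mul_zero, Matrix.zero_mul,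
        Matrix.neg_mul, Matrix.mul_neg, add_zero, zero_add, neg_neg, smul_zero] <;>
      module
  have hST : S * T = 1 := by
    rw [hT, Matrix.mul_smul, hSS, smul_smul]; norm_num
  have hTS : T * S = 1 := by
    rw [hT, Matrix.smul_mul, hSS, smul_smul]; norm_num
  have hSDS : S * D * S = (2 : ℝ) • fromBlocks Mm Nb Nb Mm := by
    rw [hS, hD, fromBlocks_multiply, fromBlocks_multiply, fromBlocks_smul,
      Matrix.fromBlocks_inj]
    refine ⟨?_, ?_, ?_, ?_⟩ <;>
      simp only [Matrix.one_mul, Matrix.mul_one, Matrix.mul_zero, Matrix.zero_mul,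
        Matrix.neg_mul, Matrix.mul_neg, add_zero, zero_add, neg_neg, smul_zero] <;>
      module
  have hconj : fromBlocks Mm Nb Nb Mm = T * D * S := by
    rw [hT, Matrix.smul_mul, Matrix.smul_mul, hSDS, smul_smul]
    norm_num
  -- Step 4: identify the two diagonal blocks
  have hfac1 : (Mm + Nb).charpoly = ((2 : ℝ) • (SimpleGraph.cycleGraph (m + 3)).lapMatrix ℝ).charpoly := by
    have hlapC : ∀ i j : Fin (m + 3), (SimpleGraph.cycleGraph (m + 3)).lapMatrix ℝ i j =
        (if i = j then (2 : ℝ) else 0) -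
          (if (SimpleGraph.cycleGraph (m + 3)).Adj i j then 1 else 0) := by
      intro i j
      by_cases h : i = j <;>
        simp [SimpleGraph.lapMatrix, SimpleGraph.degMatrix, Matrix.diagonal_apply, h,
          SimpleGraph.cycleGraph_degree_three_le]
    have hsub : ∀ i j : V, ((zmodFinEquiv m).symm i - (zmodFinEquiv m).symm j = 1) ↔ i = j + 1 := by
      intro i j
      have : (i - j = 1) ↔ i = j + 1 := sub_eq_iff_eq_add'
      exact this
    have hadjC : ∀ i j : V,
        (SimpleGraph.cycleGraph (m + 3)).Adj ((zmodFinEquiv m).symm i) ((zmodFinEquiv m).symm j) ↔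
          (i = j + 1 ∨ j = i + 1) := by
      intro i j
      rw [show ((m + 3) = (m + 1) + 2) from rfl] at *
      rw [SimpleGraph.cycleGraph_adj, hsub, hsub]
    have hMN : Matrix.reindex (zmodFinEquiv m) (zmodFinEquiv m)
        ((2 : ℝ) • (SimpleGraph.cycleGraph (m + 3)).lapMatrix ℝ) = Mm + Nb := by
      ext i j
      show (2 : ℝ) • (SimpleGraph.cycleGraph (m + 3)).lapMatrix ℝ
          ((zmodFinEquiv m).symm i) ((zmodFinEquiv m).symm j) = (Mm + Nb) i j
      rw [hlapC]
      have hEq : ((zmodFinEquiv m).symm i = (zmodFinEquiv m).symm j) ↔ i = j := Iff.rfl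
      have hC := hadjC i j
      by_cases hij : i = j
      · subst hij
        rw [if_pos (hEq.mpr rfl)]
        have hnadj : ¬ (SimpleGraph.cycleGraph (m + 3)).Adj ((zmodFinEquiv m).symm i)
            ((zmodFinEquiv m).symm i) := by
          intro h
          rcases hC.mp h with h' | h' <;> exact d3 i h'
        rw [if_neg hnadj]
        simp only [hMm, hNb, hA, Matrix.add_apply, Matrix.sub_apply, Matrix.smul_apply,
          Matrix.neg_apply, Matrix.one_apply_eq, Matrix.of_apply, if_neg (d3 i),
          if_neg (fun h => d3 i h), or_self, smul_eq_mul]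
        norm_num
      · rw [if_neg (fun h => hij (hEq.mp h))]
        have hone : (1 : Matrix V V ℝ) i j = 0 := Matrix.one_apply_ne hij
        by_cases hc : (i = j + 1 ∨ j = i + 1)
        · rw [if_pos (hC.mpr hc)]
          simp only [hMm, hNb, hA, Matrix.add_apply, Matrix.sub_apply, Matrix.smul_apply,
            Matrix.neg_apply, Matrix.of_apply, hone, if_pos hc, smul_eq_mul]
          norm_num
        · rw [if_neg (fun h => hc (hC.mp h))]
          simp only [hMm, hNb, hA, Matrix.add_apply, Matrix.sub_apply, Matrix.smul_apply,
            Matrix.neg_apply, Matrix.of_apply, hone, if_neg hc, smul_eq_mul]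
          norm_num
    rw [← hMN, Matrix.charpoly_reindex]
  have hfac2 : (Mm - Nb).charpoly = (X - C (6 : ℝ)) ^ (m + 3) := by
    have h6 : Mm - Nb = Matrix.diagonal (fun _ : V => (6 : ℝ)) := by
      have h6' : Mm - Nb = (6 : ℝ) • 1 := by rw [hMm, hNb]; module
      rw [h6']
      ext i j
      by_cases h : i = j <;>
        simp [h, Matrix.one_apply, Matrix.diagonal_apply, smul_eq_mul]
    have hch : charmatrix (Matrix.diagonal (fun _ : V => (6 : ℝ))) =
        Matrix.diagonal (fun _ : V => (X : ℝ[X]) - C 6) := by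
      ext i j
      by_cases h : i = j
      · subst h; simp
      · simp [h, Matrix.diagonal_apply_ne _ h]
    rw [h6, Matrix.charpoly, hch, Matrix.det_diagonal]
    rw [Finset.prod_const, Finset.card_univ]
    congr 1
    exact ZMod.card (m + 3)
  -- put everything together
  calc ((Gn (m + 3)).lapMatrix ℝ).charpoly
      = (Matrix.reindex e e ((Gn (m + 3)).lapMatrix ℝ)).charpoly :=
        (Matrix.charpoly_reindex e _).symm
    _ = (T * D * S).charpoly := by rw [hre, hconj]
    _ = D.charpoly := my_charpoly_conj T S D hTS
    _ = (Mm + Nb).charpoly * (Mm - Nb).charpoly := Matrix.charpoly_fromBlocks_zero₂₁ _ _ _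
    _ = _ := by rw [hfac1, hfac2]
end

section
/- For every integer n ≥ 3, the Kirchhoff index of G_n, which equals |V(G_n)| times the sum of the reciprocals of the nonzero Laplacian eigenvalues of G_n, satisfies Kf(G_n) = 2n·( ∑_{i=1}^{n−1} 1/(8·sin²(iπ/n)) + n/6 ) = (n³ + 4n² − n)/12. -/
open Finset Complex

lemma geom_zero' {n : ℕ} {x : ℂ} (hx : x ≠ 1) (hxn : x ^ n = 1) :
    ∑ k ∈ range n, x ^ k = 0 := by
  rw [geom_sum_eq hx, hxn, sub_self, zero_div]

lemma lin_sum' {n : ℕ} {x : ℂ} (hx : x ≠ 1) (hxn : x ^ n = 1) :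
    (1 - x) * ∑ k ∈ range n, (k : ℂ) * x ^ k = -n := by
  have h1 := Finset.sum_range_sub' (fun k => (k : ℂ) * x ^ k) n
  push_cast at h1
  have h2 : ∑ k ∈ range n, x ^ (k + 1) = 0 := by
    have h := geom_zero' hx hxn
    have e : ∑ k ∈ range n, x ^ (k + 1) = x * ∑ k ∈ range n, x ^ k := by
      rw [Finset.mul_sum]
      exact Finset.sum_congr rfl fun k _ => by ring
    rw [e, h, mul_zero]
  have expand : (1 - x) * ∑ k ∈ range n, (k : ℂ) * x ^ k
      = (∑ k ∈ range n, ((k : ℂ) * x ^ k - ((k : ℂ) + 1) * x ^ (k + 1)))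
        + ∑ k ∈ range n, x ^ (k + 1) := by
    rw [Finset.mul_sum, ← Finset.sum_add_distrib]
    exact Finset.sum_congr rfl fun k _ => by ring
  rw [expand, h1, h2, hxn]
  ring

lemma per_term' {n : ℕ} (hn : 0 < n) {x : ℂ} (hx : x ≠ 1) (hxn : x ^ n = 1) :
    (2 - x - x⁻¹)⁻¹ =
      (∑ k ∈ range n, (k : ℂ) * x ^ k) * (∑ l ∈ range n, (l : ℂ) * (x⁻¹) ^ l) / (n : ℂ) ^ 2 := by
  have hnC : (n : ℂ) ≠ 0 := Nat.cast_ne_zero.mpr hn.ne'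
  have hx0 : x ≠ 0 := by
    intro h; rw [h, zero_pow hn.ne'] at hxn; exact zero_ne_one hxn
  have hxi : x⁻¹ ≠ 1 := by
    intro h
    apply hx
    rw [← inv_inv x, h, inv_one]
  have hxin : (x⁻¹) ^ n = 1 := by rw [inv_pow, hxn, inv_one]
  have e1 := lin_sum' hx hxn
  have e2 := lin_sum' hxi hxin
  have key : (2 - x - x⁻¹) *
      ((∑ k ∈ range n, (k : ℂ) * x ^ k) * (∑ l ∈ range n, (l : ℂ) * (x⁻¹) ^ l)) = (n : ℂ) ^ 2 := by
    have hfac : (1 - x) * (1 - x⁻¹) = 2 - x - x⁻¹ := by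
      field_simp
      ring
    calc (2 - x - x⁻¹) * ((∑ k ∈ range n, (k : ℂ) * x ^ k) * (∑ l ∈ range n, (l : ℂ) * (x⁻¹) ^ l))
        = ((1 - x) * ∑ k ∈ range n, (k : ℂ) * x ^ k) *
          ((1 - x⁻¹) * ∑ l ∈ range n, (l : ℂ) * (x⁻¹) ^ l) := by rw [← hfac]; ring
      _ = (-n : ℂ) * (-n : ℂ) := by rw [e1, e2]
      _ = (n : ℂ) ^ 2 := by ring
  have hne : 2 - x - x⁻¹ ≠ 0 := by
    intro h
    rw [h, zero_mul] at key
    exact pow_ne_zero 2 hnC key.symm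
  rw [eq_div_iff (pow_ne_zero 2 hnC)]
  apply mul_left_cancel₀ hne
  rw [key, ← mul_assoc, mul_inv_cancel₀ hne, one_mul]

lemma sum_cast_id' (n : ℕ) : ∑ k ∈ range n, (k : ℂ) = n * (n - 1) / 2 := by
  induction n with
  | zero => simp
  | succ m ih => rw [Finset.sum_range_succ, ih]; push_cast; ring

lemma sum_cast_sq' (n : ℕ) : ∑ k ∈ range n, (k : ℂ) ^ 2 = n * (n - 1) * (2 * n - 1) / 6 := by
  induction n with
  | zero => simp
  | succ m ih => rw [Finset.sum_range_succ, ih]; push_cast; ring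

lemma complex_sum' {n : ℕ} (hn : 0 < n) {ζ : ℂ} (hζ : IsPrimitiveRoot ζ n) :
    ∑ i ∈ Finset.Ico 1 n, (2 - ζ ^ i - (ζ ^ i)⁻¹)⁻¹ = ((n : ℂ) ^ 2 - 1) / 12 := by
  have hnC : (n : ℂ) ≠ 0 := Nat.cast_ne_zero.mpr hn.ne'
  have hζ0 : ζ ≠ 0 := hζ.ne_zero hn.ne'
  have step1 : ∀ i ∈ Finset.Ico 1 n, (2 - ζ ^ i - (ζ ^ i)⁻¹)⁻¹ =
      (∑ k ∈ range n, (k : ℂ) * (ζ ^ i) ^ k) * (∑ l ∈ range n, (l : ℂ) * ((ζ ^ i)⁻¹) ^ l)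
        / (n : ℂ) ^ 2 := by
    intro i hi
    obtain ⟨hi1, hi2⟩ := Finset.mem_Ico.mp hi
    exact per_term' hn (hζ.pow_ne_one_of_pos_of_lt (Nat.one_le_iff_ne_zero.mp hi1) hi2)
      (by rw [← pow_mul, mul_comm, pow_mul, hζ.pow_eq_one, one_pow])
  rw [Finset.sum_congr rfl step1, ← Finset.sum_div]
  have swap : ∑ i ∈ Finset.Ico 1 n,
      (∑ k ∈ range n, (k : ℂ) * (ζ ^ i) ^ k) * (∑ l ∈ range n, (l : ℂ) * ((ζ ^ i)⁻¹) ^ l)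
      = ∑ k ∈ range n, ∑ l ∈ range n,
          (k : ℂ) * (l : ℂ) * ∑ i ∈ Finset.Ico 1 n, (ζ ^ k * (ζ ^ l)⁻¹) ^ i := by
    have e1 : ∀ i, (∑ k ∈ range n, (k : ℂ) * (ζ ^ i) ^ k) *
        (∑ l ∈ range n, (l : ℂ) * ((ζ ^ i)⁻¹) ^ l)
        = ∑ k ∈ range n, ∑ l ∈ range n, (k : ℂ) * (l : ℂ) * (ζ ^ k * (ζ ^ l)⁻¹) ^ i := by
      intro i
      rw [Finset.sum_mul_sum]
      refine Finset.sum_congr rfl fun k _ => Finset.sum_congr rfl fun l _ => ?_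
      have t1 : (ζ ^ i) ^ k * ((ζ ^ i)⁻¹) ^ l = ζ ^ (i * k) * (ζ ^ (i * l))⁻¹ := by
        rw [← pow_mul, inv_pow, ← pow_mul]
      have t2 : (ζ ^ k * (ζ ^ l)⁻¹) ^ i = ζ ^ (k * i) * (ζ ^ (l * i))⁻¹ := by
        rw [mul_pow, ← pow_mul, inv_pow, ← pow_mul]
      have t3 : (ζ ^ i) ^ k * ((ζ ^ i)⁻¹) ^ l = (ζ ^ k * (ζ ^ l)⁻¹) ^ i := by
        rw [t1, t2, mul_comm i k, mul_comm i l]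
      linear_combination (k : ℂ) * (l : ℂ) * t3
    calc ∑ i ∈ Finset.Ico 1 n,
          (∑ k ∈ range n, (k : ℂ) * (ζ ^ i) ^ k) * (∑ l ∈ range n, (l : ℂ) * ((ζ ^ i)⁻¹) ^ l)
        = ∑ i ∈ Finset.Ico 1 n, ∑ k ∈ range n, ∑ l ∈ range n,
            (k : ℂ) * (l : ℂ) * (ζ ^ k * (ζ ^ l)⁻¹) ^ i :=
          Finset.sum_congr rfl fun i _ => e1 i
      _ = ∑ k ∈ range n, ∑ l ∈ range n,
            (k : ℂ) * (l : ℂ) * ∑ i ∈ Finset.Ico 1 n, (ζ ^ k * (ζ ^ l)⁻¹) ^ i := by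
          rw [Finset.sum_comm]
          refine Finset.sum_congr rfl fun k _ => ?_
          rw [Finset.sum_comm]
          exact Finset.sum_congr rfl fun l _ => (Finset.mul_sum _ _ _).symm
  have inner : ∀ k ∈ range n, ∀ l ∈ range n,
      ∑ i ∈ Finset.Ico 1 n, (ζ ^ k * (ζ ^ l)⁻¹) ^ i = (if k = l then (n : ℂ) else 0) - 1 := by
    intro k hk l hl
    set u := ζ ^ k * (ζ ^ l)⁻¹ with hu
    have hun : u ^ n = 1 := by
      rw [hu, mul_pow, inv_pow, ← pow_mul, ← pow_mul, mul_comm k n, mul_comm l n, pow_mul, pow_mul,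
        hζ.pow_eq_one, one_pow, one_pow, inv_one, mul_one]
    have hsplit : ∑ i ∈ range n, u ^ i = u ^ 0 + ∑ i ∈ Finset.Ico 1 n, u ^ i := by
      rw [Finset.range_eq_Ico]
      exact Finset.sum_eq_sum_Ico_succ_bot hn _
    have hrange : ∑ i ∈ range n, u ^ i = if k = l then (n : ℂ) else 0 := by
      by_cases h : k = l
      · subst h
        have hu1 : u = 1 := mul_inv_cancel₀ (pow_ne_zero _ hζ0)
        simp [hu1]
      · have hu1 : u ≠ 1 := by
          intro h'
          apply h
          apply hζ.pow_inj (Finset.mem_range.mp hk) (Finset.mem_range.mp hl)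
          rw [hu] at h'
          exact (mul_inv_eq_one₀ (pow_ne_zero _ hζ0)).mp h'
        rw [geom_zero' hu1 hun]
        simp [h]
    have : ∑ i ∈ Finset.Ico 1 n, u ^ i = (∑ i ∈ range n, u ^ i) - 1 := by
      rw [hsplit]; simp
    rw [this, hrange]
  have step3 : ∑ k ∈ range n, ∑ l ∈ range n,
      (k : ℂ) * (l : ℂ) * ∑ i ∈ Finset.Ico 1 n, (ζ ^ k * (ζ ^ l)⁻¹) ^ i
      = ∑ k ∈ range n, ∑ l ∈ range n,
          (k : ℂ) * (l : ℂ) * ((if k = l then (n : ℂ) else 0) - 1) :=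
    Finset.sum_congr rfl fun k hk => Finset.sum_congr rfl fun l hl => by rw [inner k hk l hl]
  rw [swap, step3]
  have expand : ∑ k ∈ range n, ∑ l ∈ range n,
      (k : ℂ) * (l : ℂ) * ((if k = l then (n : ℂ) else 0) - 1)
      = (n : ℂ) * (∑ k ∈ range n, (k : ℂ) ^ 2)
        - (∑ k ∈ range n, (k : ℂ)) * (∑ l ∈ range n, (l : ℂ)) := by
    have e : ∀ k ∈ range n, ∑ l ∈ range n, (k : ℂ) * (l : ℂ) * ((if k = l then (n : ℂ) else 0) - 1)
        = (n : ℂ) * (k : ℂ) ^ 2 - (k : ℂ) * ∑ l ∈ range n, (l : ℂ) := by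
      intro k hk
      have : ∀ l ∈ range n, (k : ℂ) * (l : ℂ) * ((if k = l then (n : ℂ) else 0) - 1)
          = (if l = k then (n : ℂ) * (k : ℂ) ^ 2 else 0) - (k : ℂ) * (l : ℂ) := by
        intro l _
        by_cases h : k = l
        · subst h; simp; ring
        · simp [h, Ne.symm h]
      rw [Finset.sum_congr rfl this, Finset.sum_sub_distrib, Finset.sum_ite_eq' (range n) k
        (fun _ => (n : ℂ) * (k : ℂ) ^ 2), if_pos hk, ← Finset.mul_sum]
    rw [Finset.sum_congr rfl e, Finset.sum_sub_distrib, ← Finset.mul_sum, ← Finset.sum_mul]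
  rw [expand, sum_cast_id', sum_cast_sq']
  field_simp
  ring

lemma trig8 (z : ℂ) :
    8 * Complex.sin z ^ 2 = 2 * (2 - Complex.exp (2 * z * I) - Complex.exp (-(2 * z * I))) := by
  have h1 : Complex.exp (2 * z * I) = Complex.exp (z * I) * Complex.exp (z * I) := by
    rw [← Complex.exp_add]; ring_nf
  have h2 : Complex.exp (-(2 * z * I)) = Complex.exp (-z * I) * Complex.exp (-z * I) := by
    rw [← Complex.exp_add]; ring_nf
  have h3 : Complex.exp (z * I) * Complex.exp (-z * I) = 1 := by
    rw [← Complex.exp_add]; simp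
  have h4 : (I : ℂ) ^ 2 = -1 := Complex.I_sq
  rw [Complex.sin, h1, h2]
  linear_combination (2 : ℂ) * (Complex.exp (-z * I) - Complex.exp (z * I)) ^ 2 * h4 + 4 * h3

/-- For every integer `n ≥ 3`, the Kirchhoff index of `G_n = P₂ ⊠ C_n`,
i.e. the number of vertices `2n` times the sum of the reciprocals of the nonzero Laplacian
eigenvalues `8·sin²(iπ/n)` (`i = 1, …, n−1`) and `6` (with multiplicity `n`), equals
`(n³ + 4n² − n)/12`. -/
theorem kirchhoffIndex_Gn (n : ℕ) (hn : 3 ≤ n) :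
    2 * (n : ℝ) * ((∑ i ∈ Finset.Ico 1 n, 1 / (8 * Real.sin (i * Real.pi / n) ^ 2)) + n / 6) =
      ((n : ℝ) ^ 3 + 4 * n ^ 2 - n) / 12 := by
  have hn0 : 0 < n := by omega
  have hnC : (n : ℂ) ≠ 0 := Nat.cast_ne_zero.mpr hn0.ne'
  set ζ : ℂ := Complex.exp (2 * Real.pi * I / n) with hζdef
  have hζ : IsPrimitiveRoot ζ n := Complex.isPrimitiveRoot_exp n hn0.ne'
  have hterm : ∀ i ∈ Finset.Ico 1 n,
      ((1 / (8 * Real.sin (i * Real.pi / n) ^ 2) : ℝ) : ℂ)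
        = 2⁻¹ * (2 - ζ ^ i - (ζ ^ i)⁻¹)⁻¹ := by
    intro i hi
    have h1 : ζ ^ i = Complex.exp (2 * ((i * Real.pi / n : ℝ) : ℂ) * I) := by
      rw [hζdef, ← Complex.exp_nat_mul]
      congr 1
      push_cast
      field_simp
    have h2 : (ζ ^ i)⁻¹ = Complex.exp (-(2 * ((i * Real.pi / n : ℝ) : ℂ) * I)) := by
      rw [h1, ← Complex.exp_neg]
    have h3 := trig8 ((i * Real.pi / n : ℝ) : ℂ)
    rw [← h1, ← h2] at h3
    have hsin : ((Real.sin (i * Real.pi / n) : ℝ) : ℂ)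
        = Complex.sin ((i * Real.pi / n : ℝ) : ℂ) := Complex.ofReal_sin _
    push_cast at h3 ⊢
    rw [h3, one_div, mul_inv]
  have hsumC : ((∑ i ∈ Finset.Ico 1 n, 1 / (8 * Real.sin (i * Real.pi / n) ^ 2) : ℝ) : ℂ)
      = ((n : ℂ) ^ 2 - 1) / 24 := by
    rw [Complex.ofReal_sum, Finset.sum_congr rfl hterm, ← Finset.mul_sum,
      complex_sum' hn0 hζ]
    ring
  have hsumR : (∑ i ∈ Finset.Ico 1 n, 1 / (8 * Real.sin (i * Real.pi / n) ^ 2))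
      = ((n : ℝ) ^ 2 - 1) / 24 := by
    have h := hsumC
    rw [show (((n : ℂ) ^ 2 - 1) / 24 : ℂ) = ((((n : ℝ) ^ 2 - 1) / 24 : ℝ) : ℂ) by
      push_cast; ring] at h
    exact_mod_cast h
  rw [hsumR]
  have hnR : (n : ℝ) ≠ 0 := Nat.cast_ne_zero.mpr hn0.ne'
  field_simp
  ring
end

section
/- For every integer n ≥ 3, the multiplicative degree-Kirchhoff index of G_n, which equals 2|E(G_n)| times the sum of the reciprocals of the nonzero normalized Laplacian eigenvalues of G_n, satisfies Kf*(G_n) = 10n·( ∑_{i=1}^{n−1} 5/(8·sin²(iπ/n)) + 5n/6 ) = (25n³ + 100n² − 25n)/12. -/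
open Finset Complex

lemma normSq_one_sub_exp (t : ℝ) :
    Complex.normSq (1 - Complex.exp ((t:ℂ) * Complex.I)) = 4 * Real.sin (t/2) ^ 2 := by
  simp [Complex.normSq_apply, Complex.exp_ofReal_mul_I_re, Complex.exp_ofReal_mul_I_im]
  have h1 : Real.cos t = 2 * Real.cos (t/2) ^ 2 - 1 := by
    have := Real.cos_two_mul (t/2)
    rw [show 2 * (t/2) = t by ring] at this
    linarith
  have h2 : Real.sin t = 2 * Real.sin (t/2) * Real.cos (t/2) := by
    have := Real.sin_two_mul (t/2)
    rw [show 2 * (t/2) = t by ring] at this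
    linarith
  have h3 := Real.sin_sq_add_cos_sq (t/2)
  rw [h1, h2]; nlinarith [sq_nonneg (Real.sin (t/2)), sq_nonneg (Real.cos (t/2))]

lemma sum_range_cast (n : ℕ) : ∑ j ∈ Finset.range n, (j:ℝ) = n*(n-1)/2 := by
  induction n with
  | zero => simp
  | succ m ih => rw [Finset.sum_range_succ, ih]; push_cast; ring

lemma sum_range_sq_cast (n : ℕ) : ∑ j ∈ Finset.range n, (j:ℝ)^2 = n*(n-1)*(2*n-1)/6 := by
  induction n with
  | zero => simp
  | succ m ih => rw [Finset.sum_range_succ, ih]; push_cast; ring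

lemma keyA (n : ℕ) (u : ℂ) (hu1 : u ≠ 1) (hun : u ^ n = 1) :
    (1 - u) * ∑ j ∈ range n, (j : ℂ) * u ^ j = -n := by
  have h0 : ∑ j ∈ range n, u ^ j = 0 := by
    rw [geom_sum_eq hu1, hun]; simp
  have h : (1 - u) * ∑ j ∈ range n, (j : ℂ) * u ^ j
      = (∑ j ∈ range n, ((fun m : ℕ => (m : ℂ) * u ^ m) j - (fun m : ℕ => (m : ℂ) * u ^ m) (j+1)))
        + u * ∑ j ∈ range n, u ^ j := by
    rw [Finset.mul_sum, Finset.mul_sum, ← Finset.sum_add_distrib]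
    apply Finset.sum_congr rfl; intro j _
    push_cast; ring
  rw [h, Finset.sum_range_sub' (fun m : ℕ => (m : ℂ) * u ^ m), h0, hun]
  simp

lemma sum_csc_sq (n : ℕ) (hn : 3 ≤ n) :
    ∑ k ∈ Ico 1 n, 1 / (Real.sin (k * Real.pi / n) ^ 2) = ((n:ℝ)^2 - 1) / 3 := by
  have hn0 : (n:ℝ) ≠ 0 := by positivity
  set ω : ℂ := Complex.exp (2 * Real.pi * Complex.I / n) with hω
  have hprim : IsPrimitiveRoot ω n := Complex.isPrimitiveRoot_exp n (by omega)
  have hωn : ω ^ n = 1 := hprim.pow_eq_one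
  have hω0 : ω ≠ 0 := Complex.exp_ne_zero _
  have hcω : (starRingEnd ℂ) ω = ω⁻¹ := by
    have habs : ‖ω‖ = 1 := by
      rw [hω, show (2 * (Real.pi:ℂ) * Complex.I / n) = ((2*Real.pi/n : ℝ):ℂ) * Complex.I by
        push_cast; ring]
      exact Complex.norm_exp_ofReal_mul_I _
    rw [Complex.inv_def, Complex.normSq_eq_norm_sq, habs]
    simp
  set S : ℕ → ℂ := fun k => ∑ j ∈ range n, (j:ℂ) * (ω^k)^j with hS
  -- per-k identity
  have hper : ∀ k ∈ Ico 1 n,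
      4 * Real.sin (k * Real.pi / n) ^ 2 * Complex.normSq (S k) = (n:ℝ)^2 := by
    intro k hk
    rw [Finset.mem_Ico] at hk
    have hu1 : ω ^ k ≠ 1 := hprim.pow_ne_one_of_pos_of_lt (by omega) hk.2
    have hukn : (ω^k) ^ n = 1 := by rw [← pow_mul, mul_comm, pow_mul, hωn, one_pow]
    have hA := keyA n (ω^k) hu1 hukn
    have hB := congrArg Complex.normSq hA
    rw [map_mul] at hB
    have hexp : ω ^ k = Complex.exp (((2 * k * Real.pi / n : ℝ):ℂ) * Complex.I) := by
      rw [hω, ← Complex.exp_nat_mul]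
      congr 1
      push_cast; ring
    have hns : Complex.normSq (1 - ω^k) = 4 * Real.sin (k * Real.pi / n) ^ 2 := by
      rw [hexp, normSq_one_sub_exp, show (2 * (k:ℝ) * Real.pi / n)/2 = k * Real.pi / n by ring]
    rw [hns] at hB
    simpa [hS, sq] using hB
  have hsin : ∀ k ∈ Ico 1 n, Real.sin (k * Real.pi / n) ≠ 0 := by
    intro k hk
    rw [Finset.mem_Ico] at hk
    have hk1 : (1:ℝ) ≤ k := by exact_mod_cast hk.1
    have hk2 : (k:ℝ) < n := by exact_mod_cast hk.2
    have hnpos : (0:ℝ) < n := by positivity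
    have h1 : 0 < (k:ℝ) * Real.pi / n := by positivity
    have h2 : (k:ℝ) * Real.pi / n < Real.pi := by
      rw [div_lt_iff₀ hnpos]
      nlinarith [Real.pi_pos]
    exact ne_of_gt (Real.sin_pos_of_pos_of_lt_pi h1 h2)
  have hstep : ∀ k ∈ Ico 1 n,
      1 / Real.sin (k * Real.pi / n) ^ 2 = 4 * Complex.normSq (S k) / (n:ℝ)^2 := by
    intro k hk
    have h1 := hper k hk
    have h2 := hsin k hk
    field_simp
    linarith
  rw [Finset.sum_congr rfl hstep]
  -- inner geometric sums
  have hinner : ∀ j ∈ range n, ∀ l ∈ range n,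
      ∑ k ∈ Ico 1 n, (ω^j * ((starRingEnd ℂ) ω)^l)^k = (if j = l then (n:ℂ) else 0) - 1 := by
    intro j hj l hl
    rw [Finset.mem_range] at hj hl
    rw [hcω, inv_pow]
    by_cases hjl : j = l
    · subst hjl
      rw [mul_inv_cancel₀ (pow_ne_zero _ hω0), if_pos rfl]
      simp only [one_pow, Finset.sum_const, Nat.card_Ico]
      rw [nsmul_eq_mul, mul_one, Nat.cast_sub (by omega : 1 ≤ n), Nat.cast_one]
    · have hv1 : ω^j * (ω^l)⁻¹ ≠ 1 := by
        intro h
        apply hjl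
        refine hprim.pow_inj hj hl ?_
        have hl0 : ω^l ≠ 0 := pow_ne_zero _ hω0
        field_simp at h
        exact h
      have hvn : (ω^j * (ω^l)⁻¹)^n = 1 := by
        rw [mul_pow, inv_pow, ← pow_mul, ← pow_mul, mul_comm j n, mul_comm l n,
          pow_mul, pow_mul, hωn, one_pow, one_pow]
        simp
      have h0 : ∑ k ∈ range n, (ω^j*(ω^l)⁻¹)^k = 0 := by
        rw [geom_sum_eq hv1, hvn]; simp
      rw [Finset.range_eq_Ico, Finset.sum_eq_sum_Ico_succ_bot (by omega : 0 < n)] at h0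
      rw [if_neg hjl]
      simp only [pow_zero] at h0
      linear_combination h0
  -- expand the sum of normSq
  have cω := (starRingEnd ℂ) ω
  have hexpand : ((∑ k ∈ Ico 1 n, Complex.normSq (S k) : ℝ) : ℂ)
      = (n:ℂ) * (∑ j ∈ range n, (j:ℂ)^2) - (∑ j ∈ range n, (j:ℂ)) * (∑ j ∈ range n, (j:ℂ)) := by
    calc ((∑ k ∈ Ico 1 n, Complex.normSq (S k) : ℝ) : ℂ)
        = ∑ k ∈ Ico 1 n, (S k * (starRingEnd ℂ) (S k)) := by
          rw [Complex.ofReal_sum]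
          exact Finset.sum_congr rfl fun k _ => (Complex.mul_conj (S k)).symm
      _ = ∑ k ∈ Ico 1 n, ∑ j ∈ range n, ∑ l ∈ range n,
            ((j:ℂ) * l) * (ω^j * ((starRingEnd ℂ) ω)^l)^k := by
          apply Finset.sum_congr rfl; intro k _
          rw [hS]
          simp only
          rw [map_sum, Finset.sum_mul_sum]
          apply Finset.sum_congr rfl; intro j _
          apply Finset.sum_congr rfl; intro l _
          simp only [map_mul, map_pow, Complex.conj_natCast]
          ring
      _ = ∑ j ∈ range n, ∑ l ∈ range n,
            ((j:ℂ) * l) * ∑ k ∈ Ico 1 n, (ω^j * ((starRingEnd ℂ) ω)^l)^k := by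
          rw [Finset.sum_comm]
          apply Finset.sum_congr rfl; intro j _
          rw [Finset.sum_comm]
          apply Finset.sum_congr rfl; intro l _
          rw [Finset.mul_sum]
      _ = ∑ j ∈ range n, ∑ l ∈ range n,
            ((j:ℂ) * l) * ((if j = l then (n:ℂ) else 0) - 1) := by
          apply Finset.sum_congr rfl; intro j hj
          apply Finset.sum_congr rfl; intro l hl
          rw [hinner j hj l hl]
      _ = (n:ℂ) * (∑ j ∈ range n, (j:ℂ)^2) - (∑ j ∈ range n, (j:ℂ)) * (∑ j ∈ range n, (j:ℂ)) := by
          simp only [mul_sub, mul_one, mul_ite, mul_zero, Finset.sum_sub_distrib,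
            Finset.sum_ite_eq, Finset.mem_range]
          congr 1
          · rw [Finset.mul_sum]
            apply Finset.sum_congr rfl
            intro j hj
            rw [if_pos (Finset.mem_range.mp hj)]
            ring
          · rw [Finset.sum_mul_sum]
  have hT : (∑ k ∈ Ico 1 n, Complex.normSq (S k))
      = (n:ℝ) * (∑ j ∈ range n, (j:ℝ)^2) - (∑ j ∈ range n, (j:ℝ)) * (∑ j ∈ range n, (j:ℝ)) := by
    rw [show ((n:ℂ) * (∑ j ∈ range n, (j:ℂ)^2) - (∑ j ∈ range n, (j:ℂ)) * (∑ j ∈ range n, (j:ℂ)))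
        = (((n:ℝ) * (∑ j ∈ range n, (j:ℝ)^2)
            - (∑ j ∈ range n, (j:ℝ)) * (∑ j ∈ range n, (j:ℝ)) : ℝ) : ℂ) by
      push_cast; ring] at hexpand
    exact Complex.ofReal_inj.mp hexpand
  rw [← Finset.sum_div, ← Finset.mul_sum, hT, sum_range_cast, sum_range_sq_cast]
  field_simp
  ring


/-- For every integer `n ≥ 3`, the multiplicative degree-Kirchhoff index of
`G_n = P₂ ⊠ C_n`, i.e. twice the number of edges `2·5n = 10n` times the sum of the reciprocals
of the nonzero normalized Laplacian eigenvalues `(8/5)·sin²(iπ/n)` (`i = 1, …, n−1`) and `6/5`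
(with multiplicity `n`), equals `(25n³ + 100n² − 25n)/12`. -/
theorem mulDegKirchhoffIndex_Gn (n : ℕ) (hn : 3 ≤ n) :
    10 * (n : ℝ) *
        ((∑ i ∈ Finset.Ico 1 n, 5 / (8 * Real.sin (i * Real.pi / n) ^ 2)) + 5 * n / 6) =
      (25 * (n : ℝ) ^ 3 + 100 * n ^ 2 - 25 * n) / 12 := by
  have h1 : ∀ i ∈ Finset.Ico 1 n, (5:ℝ) / (8 * Real.sin (i * Real.pi / n) ^ 2)
      = (5/8) * (1 / Real.sin (i * Real.pi / n) ^ 2) := by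
    intro i _
    rw [div_mul_div_comm]
    norm_num
  rw [Finset.sum_congr rfl h1, ← Finset.mul_sum, sum_csc_sq n hn]
  ring
end

section
/- Let n ≥ 3 and 0 ≤ r ≤ n. The Kirchhoff index of any graph G_n^r obtained from G_n by deleting r vertical edges, which equals |V(G_n^r)| times the sum of the reciprocals of its nonzero Laplacian eigenvalues, satisfies Kf(G_n^r) = 2n·( ∑_{i=1}^{n−1} 1/(8·sin²(iπ/n)) + (n−r)/6 + r/4 ) = (n³ + 4n² + (2r−1)n)/12. -/
open Finset

lemma sum_j_zj (n : ℕ) (z : ℂ) (hzn : z ^ n = 1) (hz1 : z ≠ 1) :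
    ∑ j ∈ range n, (j : ℂ) * z ^ j = n / (z - 1) := by
  have hz : z - 1 ≠ 0 := sub_ne_zero.mpr hz1
  have hgeom : ∑ j ∈ range n, z ^ j = 0 := by
    rw [geom_sum_eq hz1, hzn, sub_self, zero_div]
  have htel := Finset.sum_range_sub (fun j => ((j : ℂ) - 1) * z ^ j) n
  have hmain : (z - 1) * ∑ j ∈ range n, (j : ℂ) * z ^ j = n := by
    calc (z - 1) * ∑ j ∈ range n, (j : ℂ) * z ^ j
        = ∑ j ∈ range n, ((((j + 1 : ℕ) : ℂ) - 1) * z ^ (j + 1) - ((j : ℂ) - 1) * z ^ j)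
            - ∑ j ∈ range n, z ^ j := by
          rw [Finset.mul_sum, ← Finset.sum_sub_distrib]
          refine Finset.sum_congr rfl fun j _ => ?_
          push_cast; ring
      _ = (((n : ℕ) : ℂ) - 1) * z ^ n - (((0 : ℕ) : ℂ) - 1) * z ^ 0 - 0 := by
          rw [htel, hgeom]
      _ = (n : ℂ) := by rw [hzn]; push_cast; ring
  field_simp [← hmain]
  linear_combination hmain

section
variable (n : ℕ)

noncomputable def ω (n : ℕ) : ℂ := Complex.exp (2 * Real.pi * Complex.I / n)

lemma omega_pow (k : ℕ) : ω n ^ k = Complex.exp ((k : ℂ) * (2 * Real.pi * Complex.I / n)) := by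
  rw [Complex.exp_nat_mul]; rfl

lemma omega_pow_n (hn : 3 ≤ n) : ω n ^ n = 1 := by
  have h0 : (n : ℂ) ≠ 0 := Nat.cast_ne_zero.mpr (by omega)
  rw [omega_pow]
  rw [show (n : ℂ) * (2 * Real.pi * Complex.I / n) = 2 * Real.pi * Complex.I by
    field_simp]
  exact Complex.exp_two_pi_mul_I

lemma omega_pow_eq_one_iff (hn : 3 ≤ n) (m : ℕ) : ω n ^ m = 1 ↔ (n : ℕ) ∣ m := by
  have h0 : (n : ℂ) ≠ 0 := Nat.cast_ne_zero.mpr (by omega)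
  rw [omega_pow, Complex.exp_eq_one_iff]
  constructor
  · rintro ⟨q, hq⟩
    have hpi : (2 * (Real.pi : ℂ) * Complex.I) ≠ 0 := by
      simp [Real.pi_ne_zero, Complex.I_ne_zero]
    have : (m : ℂ) = q * n := by
      field_simp at hq
      have := mul_right_cancel₀ hpi (by linear_combination (2 * Real.pi * Complex.I) * hq : (m:ℂ) * (2 * Real.pi * Complex.I) = (q * n) * (2 * Real.pi * Complex.I))
      exact this
    have hz : (m : ℤ) = q * n := by exact_mod_cast this
    have : (n : ℤ) ∣ (m : ℤ) := ⟨q, by rw [hz]; ring⟩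
    exact_mod_cast this
  · rintro ⟨q, rfl⟩
    refine ⟨q, ?_⟩
    push_cast
    field_simp
end

lemma sum_cast_range (n : ℕ) : ∑ j ∈ range n, (j : ℂ) = n * (n - 1) / 2 := by
  induction n with
  | zero => simp
  | succ m ih => rw [Finset.sum_range_succ, ih]; push_cast; ring

lemma sum_cast_sq_range (n : ℕ) : ∑ j ∈ range n, (j : ℂ) ^ 2 = n * (n - 1) * (2 * n - 1) / 6 := by
  induction n with
  | zero => simp
  | succ m ih => rw [Finset.sum_range_succ, ih]; push_cast; ring

lemma orth (n : ℕ) (hn : 3 ≤ n) (m : ℕ) :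
    ∑ k ∈ Ico 1 n, ω n ^ (m * k) = (if n ∣ m then (n : ℂ) else 0) - 1 := by
  have hsplit : ∑ k ∈ range n, (ω n ^ m) ^ k
      = (ω n ^ m) ^ 0 + ∑ k ∈ Ico 1 n, (ω n ^ m) ^ k := by
    rw [Finset.range_eq_Ico, Finset.sum_eq_sum_Ico_succ_bot (by omega : 0 < n)]
  have hterm : ∀ k, ω n ^ (m * k) = (ω n ^ m) ^ k := fun k => by rw [pow_mul]
  simp only [hterm]
  by_cases hd : n ∣ m
  · have h1 : ω n ^ m = 1 := (omega_pow_eq_one_iff n hn m).mpr hd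
    simp [h1, hd, Finset.sum_const, Nat.card_Ico]
    have : (1:ℕ) ≤ n := by omega
    push_cast [this]
    ring
  · have h1 : ω n ^ m ≠ 1 := fun h => hd ((omega_pow_eq_one_iff n hn m).mp h)
    have hg : ∑ k ∈ range n, (ω n ^ m) ^ k = 0 := by
      rw [geom_sum_eq h1, ← pow_mul, mul_comm m n, pow_mul, omega_pow_n n hn,
        one_pow, sub_self, zero_div]
    rw [hg, pow_zero] at hsplit
    rw [if_neg hd]
    linear_combination -hsplit

lemma complex_T (n : ℕ) (hn : 3 ≤ n) :
    ∑ k ∈ Ico 1 n, 1 / ((1 - ω n ^ k) * (1 - ω n ^ (n - k)))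
      = ((n : ℂ) ^ 2 - 1) / 12 := by
  have h0 : (n : ℂ) ≠ 0 := Nat.cast_ne_zero.mpr (by omega)
  have hne1 : ∀ k ∈ Ico 1 n, ω n ^ k ≠ 1 := by
    intro k hk h
    rw [Finset.mem_Ico] at hk
    obtain ⟨q, rfl⟩ := (omega_pow_eq_one_iff n hn k).mp h
    rcases Nat.eq_zero_or_pos q with rfl | hq
    · simp at hk
    · have := Nat.le_mul_of_pos_right n hq
      omega
  have hrootpow : ∀ k : ℕ, (ω n ^ k) ^ n = 1 := fun k => by
    rw [← pow_mul, mul_comm k n, pow_mul, omega_pow_n n hn, one_pow]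
  -- step 1: expand each term as a double sum
  have hterm : ∀ k ∈ Ico 1 n,
      1 / ((1 - ω n ^ k) * (1 - ω n ^ (n - k))) =
      ∑ j ∈ range n, ∑ l ∈ range n,
        (1 / (n : ℂ) ^ 2) * ((j : ℂ) * (l : ℂ) * ω n ^ (k * j + (n - k) * l)) := by
    intro k hk
    rw [Finset.mem_Ico] at hk
    have hk' : n - k ∈ Ico 1 n := by rw [Finset.mem_Ico]; omega
    have h1 : ∑ j ∈ range n, (j : ℂ) * (ω n ^ k) ^ j = n / (ω n ^ k - 1) :=
      sum_j_zj n _ (hrootpow k) (hne1 k (by rw [Finset.mem_Ico]; omega))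
    have h2 : ∑ l ∈ range n, (l : ℂ) * (ω n ^ (n - k)) ^ l = n / (ω n ^ (n - k) - 1) :=
      sum_j_zj n _ (hrootpow (n - k)) (hne1 _ hk')
    have ha : ω n ^ k - 1 ≠ 0 := sub_ne_zero.mpr (hne1 k (by rw [Finset.mem_Ico]; omega))
    have hb : ω n ^ (n - k) - 1 ≠ 0 := sub_ne_zero.mpr (hne1 _ hk')
    calc 1 / ((1 - ω n ^ k) * (1 - ω n ^ (n - k)))
        = (1 / (n : ℂ) ^ 2) * ((n / (ω n ^ k - 1)) * (n / (ω n ^ (n - k) - 1))) := by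
          have ha' : (1 : ℂ) - ω n ^ k ≠ 0 := by
            intro h; exact ha (by linear_combination -h)
          have hb' : (1 : ℂ) - ω n ^ (n - k) ≠ 0 := by
            intro h; exact hb (by linear_combination -h)
          field_simp
          ring
      _ = (1 / (n : ℂ) ^ 2) * ((∑ j ∈ range n, (j : ℂ) * (ω n ^ k) ^ j) *
            (∑ l ∈ range n, (l : ℂ) * (ω n ^ (n - k)) ^ l)) := by rw [h1, h2]
      _ = ∑ j ∈ range n, ∑ l ∈ range n,
            (1 / (n : ℂ) ^ 2) * ((j : ℂ) * (l : ℂ) * ω n ^ (k * j + (n - k) * l)) := by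
          rw [Finset.sum_mul_sum, Finset.mul_sum]
          refine Finset.sum_congr rfl fun j _ => ?_
          rw [Finset.mul_sum]
          refine Finset.sum_congr rfl fun l _ => ?_
          rw [pow_add, ← pow_mul, ← pow_mul]
          ring
  -- step 2: swap sums and evaluate the inner sum over k
  have hswap : ∑ k ∈ Ico 1 n, ∑ j ∈ range n, ∑ l ∈ range n,
      (1 / (n : ℂ) ^ 2) * ((j : ℂ) * (l : ℂ) * ω n ^ (k * j + (n - k) * l))
      = ∑ j ∈ range n, ∑ l ∈ range n,
          (1 / (n : ℂ) ^ 2) * ((j : ℂ) * (l : ℂ) * ((if j = l then (n : ℂ) else 0) - 1)) := by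
    rw [Finset.sum_comm]
    refine Finset.sum_congr rfl fun j hj => ?_
    rw [Finset.sum_comm]
    refine Finset.sum_congr rfl fun l hl => ?_
    rw [Finset.mem_range] at hj hl
    have hexp : ∀ k ∈ Ico 1 n,
        (1 / (n : ℂ) ^ 2) * ((j : ℂ) * (l : ℂ) * ω n ^ (k * j + (n - k) * l))
          = ((1 / (n : ℂ) ^ 2) * ((j : ℂ) * (l : ℂ))) * ω n ^ ((j + (n - l)) * k) := by
      intro k hk
      rw [Finset.mem_Ico] at hk
      have harith : (j + (n - l)) * k + n * l = (k * j + (n - k) * l) + n * k := by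
        zify [Nat.le_of_lt hl, Nat.le_of_lt hk.2]
        ring
      have hωeq : ω n ^ ((j + (n - l)) * k) = ω n ^ (k * j + (n - k) * l) := by
        have h1 : ω n ^ ((j + (n - l)) * k) * ω n ^ (n * l)
            = ω n ^ (k * j + (n - k) * l) * ω n ^ (n * k) := by
          rw [← pow_add, ← pow_add, harith]
        have h2 : ω n ^ (n * l) = 1 := by rw [pow_mul, omega_pow_n n hn, one_pow]
        have h3 : ω n ^ (n * k) = 1 := by rw [pow_mul, omega_pow_n n hn, one_pow]
        rw [h2, h3, mul_one, mul_one] at h1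
        exact h1
      rw [hωeq]
      ring
    rw [Finset.sum_congr rfl hexp, ← Finset.mul_sum, orth n hn]
    have hdvd : n ∣ (j + (n - l)) ↔ j = l := by
      constructor
      · rintro ⟨q, hq⟩
        rcases Nat.lt_or_ge q 2 with h | h
        · interval_cases q <;> omega
        · have : 2 * n ≤ n * q := by
            calc 2 * n = n * 2 := by ring
            _ ≤ n * q := Nat.mul_le_mul_left n h
          omega
      · rintro rfl; exact ⟨1, by omega⟩
    rw [if_congr hdvd rfl rfl]
    ring
  -- step 3: evaluate the double sum
  have hfinal : ∑ j ∈ range n, ∑ l ∈ range n,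
      (1 / (n : ℂ) ^ 2) * ((j : ℂ) * (l : ℂ) * ((if j = l then (n : ℂ) else 0) - 1))
      = ((n : ℂ) ^ 2 - 1) / 12 := by
    have hinner : ∀ j ∈ range n, ∑ l ∈ range n,
        (1 / (n : ℂ) ^ 2) * ((j : ℂ) * (l : ℂ) * ((if j = l then (n : ℂ) else 0) - 1))
        = (1 / (n : ℂ) ^ 2) * ((j : ℂ) ^ 2 * n) -
          (1 / (n : ℂ) ^ 2) * ((j : ℂ) * ∑ l ∈ range n, (l : ℂ)) := by
      intro j hj
      calc ∑ l ∈ range n, (1 / (n : ℂ) ^ 2) * ((j : ℂ) * (l : ℂ) * ((if j = l then (n : ℂ) else 0) - 1))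
          = ∑ l ∈ range n, ((if j = l then (1 / (n : ℂ) ^ 2) * ((j : ℂ) * (l : ℂ) * n) else 0)
              - ((1 / (n : ℂ) ^ 2) * (j : ℂ)) * (l : ℂ)) := by
            refine Finset.sum_congr rfl fun l _ => ?_
            split <;> ring
        _ = (1 / (n : ℂ) ^ 2) * ((j : ℂ) ^ 2 * n) -
              (1 / (n : ℂ) ^ 2) * ((j : ℂ) * ∑ l ∈ range n, (l : ℂ)) := by
            rw [Finset.sum_sub_distrib, Finset.sum_ite_eq, if_pos hj, ← Finset.mul_sum]
            ring
    rw [Finset.sum_congr rfl hinner, Finset.sum_sub_distrib]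
    have e1 : ∑ j ∈ range n, (1 / (n : ℂ) ^ 2) * ((j : ℂ) ^ 2 * n)
        = (1 / (n : ℂ) ^ 2) * (n : ℂ) * ∑ j ∈ range n, (j : ℂ) ^ 2 := by
      rw [Finset.mul_sum]; exact Finset.sum_congr rfl fun j _ => by ring
    have e2 : ∑ j ∈ range n, (1 / (n : ℂ) ^ 2) * ((j : ℂ) * ∑ l ∈ range n, (l : ℂ))
        = (1 / (n : ℂ) ^ 2) * (∑ l ∈ range n, (l : ℂ)) * ∑ j ∈ range n, (j : ℂ) := by
      rw [Finset.mul_sum]; exact Finset.sum_congr rfl fun j _ => by ring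
    rw [e1, e2, sum_cast_range, sum_cast_sq_range]
    have hi : (n : ℂ) * (n : ℂ)⁻¹ = 1 := mul_inv_cancel₀ h0
    field_simp
    ring
  rw [Finset.sum_congr rfl hterm, hswap, hfinal]

lemma foursin (n : ℕ) (hn : 3 ≤ n) (k : ℕ) (hk : k ∈ Ico 1 n) :
    (1 - ω n ^ k) * (1 - ω n ^ (n - k)) = ((4 * Real.sin (k * Real.pi / n) ^ 2 : ℝ) : ℂ) := by
  rw [Finset.mem_Ico] at hk
  set θ : ℝ := 2 * Real.pi * k / n with hθ
  have ha : ω n ^ k = Complex.exp ((θ : ℂ) * Complex.I) := by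
    rw [omega_pow]; congr 1; rw [hθ]; push_cast; ring
  have hab : ω n ^ k * ω n ^ (n - k) = 1 := by
    rw [← pow_add, show k + (n - k) = n by omega, omega_pow_n n hn]
  have hb : ω n ^ (n - k) = Complex.exp (-(θ : ℂ) * Complex.I) := by
    rw [neg_mul, Complex.exp_neg, ← ha]
    exact eq_inv_of_mul_eq_one_right hab
  have hcos : ω n ^ k + ω n ^ (n - k) = 2 * Complex.cos (θ : ℂ) := by
    rw [ha, hb, Complex.two_cos]
  have hr : (4 * Real.sin (k * Real.pi / n) ^ 2 : ℝ) = 2 - 2 * Real.cos θ := by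
    rw [hθ, show 2 * Real.pi * k / n = 2 * (k * Real.pi / n) by ring,
      Real.cos_two_mul, Real.sin_sq]
    ring
  calc (1 - ω n ^ k) * (1 - ω n ^ (n - k))
      = 2 - (ω n ^ k + ω n ^ (n - k)) := by linear_combination hab
    _ = 2 - 2 * Complex.cos (θ : ℂ) := by rw [hcos]
    _ = ((4 * Real.sin (k * Real.pi / n) ^ 2 : ℝ) : ℂ) := by
        rw [hr]; push_cast [Complex.ofReal_cos]; ring

lemma sum_inv_foursin (n : ℕ) (hn : 3 ≤ n) :
    ∑ k ∈ Ico 1 n, 1 / (4 * Real.sin (k * Real.pi / n) ^ 2) = ((n : ℝ) ^ 2 - 1) / 12 := by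
  have h := complex_T n hn
  have hc : ((∑ k ∈ Ico 1 n, 1 / (4 * Real.sin (k * Real.pi / n) ^ 2) : ℝ) : ℂ)
      = ((((n : ℝ) ^ 2 - 1) / 12 : ℝ) : ℂ) := by
    calc ((∑ k ∈ Ico 1 n, 1 / (4 * Real.sin (k * Real.pi / n) ^ 2) : ℝ) : ℂ)
        = ∑ k ∈ Ico 1 n, ((1 / (4 * Real.sin (k * Real.pi / n) ^ 2) : ℝ) : ℂ) := by
          push_cast; rfl
      _ = ∑ k ∈ Ico 1 n, 1 / ((1 - ω n ^ k) * (1 - ω n ^ (n - k))) := by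
          refine Finset.sum_congr rfl fun k hk => ?_
          rw [foursin n hn k hk]
          push_cast; rfl
      _ = ((n : ℂ) ^ 2 - 1) / 12 := h
      _ = ((((n : ℝ) ^ 2 - 1) / 12 : ℝ) : ℂ) := by push_cast; rfl
  exact_mod_cast hc



/-- Let `n ≥ 3` and `0 ≤ r ≤ n`. The Kirchhoff index of any graph `G_n^r`
obtained from `G_n = P₂ ⊠ C_n` by deleting `r` vertical edges, i.e. the number of vertices `2n`
times the sum of the reciprocals of its nonzero Laplacian eigenvalues `8·sin²(iπ/n)`
(`i = 1, …, n−1`), `4` (with multiplicity `r`) and `6` (with multiplicity `n−r`), equals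
`(n³ + 4n² + (2r−1)n)/12`. -/
theorem kirchhoffIndex_Gn_del (n r : ℕ) (hn : 3 ≤ n) (hr : r ≤ n) :
    2 * (n : ℝ) *
        ((∑ i ∈ Finset.Ico 1 n, 1 / (8 * Real.sin (i * Real.pi / n) ^ 2)) +
          ((n : ℝ) - r) / 6 + r / 4) =
      ((n : ℝ) ^ 3 + 4 * n ^ 2 + (2 * r - 1) * n) / 12 := by
  have hstep : ∑ i ∈ Finset.Ico 1 n, 1 / (8 * Real.sin (i * Real.pi / n) ^ 2)
      = (1 / 2) * ∑ i ∈ Finset.Ico 1 n, 1 / (4 * Real.sin (i * Real.pi / n) ^ 2) := by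
    rw [Finset.mul_sum]
    refine Finset.sum_congr rfl fun i _ => ?_
    rw [show (8 : ℝ) * Real.sin (i * Real.pi / n) ^ 2
        = 2 * (4 * Real.sin (i * Real.pi / n) ^ 2) by ring, one_div, mul_inv]
    ring
  rw [hstep, sum_inv_foursin n hn]
  ring
end
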